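/- For a, b > 0 with a + b ≤ 1, and for all x ≥ c(a,b), the quantity S(a,b,x) = 1 - a²b²/((a+b+1)(a+b)) - ab(a+1)(b+1)(a+b+ab+2)/((a+b)(a+b+1)(a+b+2)) · x is strictly negative, where c(a,b) = (a+b)(a+b-2ab)(a+b+1)/(ab((a+b+1)(a+b-2ab)+ab(a+b))). -/

import Mathlib

theorem key (s p : ℝ) (hs : 0 < s) (hs1 : s ≤ 1) (hp : 0 < p) (hps : 4*p ≤ s^2) :
    0 < s^2*(s+1)^2 - 2*p*s*(s+1)*(s+2) - p^2*(3*s^2+6*s+4) := by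
  have h4 : 0 ≤ s^2 - 4*p := by linarith
  have t1 : 0 ≤ (s^2-4*p)*(2*s*(s+1)*(s+2) + (3*s^2+6*s+4)*(p+s^2/4)) := by
    have h5 : 0 ≤ 2*s*(s+1)*(s+2) + (3*s^2+6*s+4)*(p+s^2/4) := by positivity
    exact mul_nonneg h4 h5
  have t2 : 0 ≤ s^2*(1-s)*(3*s^3+17*s^2+29*s+13) := by
    have : 0 ≤ 1 - s := by linarith
    positivity
  have t3 : 0 < s^2 := by positivity
  nlinarith [t1, t2, t3]

theorem stmt_2 (a b : ℝ) (ha : 0 < a) (hb : 0 < b) (hab : a + b ≤ 1) (x : ℝ)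
    (hx : (a + b) * (a + b - 2 * a * b) * (a + b + 1) /
      (a * b * ((a + b + 1) * (a + b - 2 * a * b) + a * b * (a + b))) ≤ x) :
    1 - a ^ 2 * b ^ 2 / ((a + b + 1) * (a + b))
      - a * b * (a + 1) * (b + 1) * (a + b + a * b + 2)
        / ((a + b) * (a + b + 1) * (a + b + 2)) * x < 0 := by
  have ha1 : a < 1 := by linarith
  have hb1 : b < 1 := by linarith
  have hs : 0 < a + b := by linarith
  have hp : 0 < a * b := mul_pos ha hb
  have hT : 0 < a + b - 2 * a * b := by nlinarith
  have hs1 : 0 < a + b + 1 := by linarith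
  have hs2 : 0 < a + b + 2 := by linarith
  have hcD : 0 < a * b * ((a + b + 1) * (a + b - 2 * a * b) + a * b * (a + b)) := by positivity
  have hK : 0 < a * b * (a + 1) * (b + 1) * (a + b + a * b + 2)
        / ((a + b) * (a + b + 1) * (a + b + 2)) := by positivity
  set c : ℝ := (a + b) * (a + b - 2 * a * b) * (a + b + 1) /
      (a * b * ((a + b + 1) * (a + b - 2 * a * b) + a * b * (a + b))) with hc
  set K : ℝ := a * b * (a + 1) * (b + 1) * (a + b + a * b + 2)
        / ((a + b) * (a + b + 1) * (a + b + 2)) with hKdef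
  have hstep : 1 - a ^ 2 * b ^ 2 / ((a + b + 1) * (a + b)) - K * x
      ≤ 1 - a ^ 2 * b ^ 2 / ((a + b + 1) * (a + b)) - K * c := by
    have := mul_le_mul_of_nonneg_left hx hK.le
    linarith
  refine lt_of_le_of_lt hstep ?_
  have hkey := key (a + b) (a * b) hs hab hp (by nlinarith [sq_nonneg (a - b)])
  have hM : 0 < a^2 * b^2 * ((a+b)^2*((a+b)+1)^2 - 2*(a*b)*(a+b)*((a+b)+1)*((a+b)+2)
      - (a*b)^2*(3*(a+b)^2+6*(a+b)+4)) := by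
    have : (0:ℝ) < a^2*b^2 := by positivity
    nlinarith [mul_pos this hkey]
  have hD : 0 < (a + b) * (a + b + 1) * (a + b + 2)
      * (a * b * ((a + b + 1) * (a + b - 2 * a * b) + a * b * (a + b))) := by positivity
  have heq : 1 - a ^ 2 * b ^ 2 / ((a + b + 1) * (a + b)) - K * c
      = -(a^2 * b^2 * ((a+b)^2*((a+b)+1)^2 - 2*(a*b)*(a+b)*((a+b)+1)*((a+b)+2)
        - (a*b)^2*(3*(a+b)^2+6*(a+b)+4)))
      / ((a + b) * (a + b + 1) * (a + b + 2)
        * (a * b * ((a + b + 1) * (a + b - 2 * a * b) + a * b * (a + b)))) := by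
    rw [hc, hKdef]
    have hE : (a + b + 1) * (a + b - 2 * a * b) + a * b * (a + b) ≠ 0 := by positivity
    set E := (a + b + 1) * (a + b - 2 * a * b) + a * b * (a + b) with hEd
    field_simp
    rw [hEd]
    ring
  rw [heq]
  exact div_neg_of_neg_of_pos (by linarith) hD
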